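/- For all (q, v, t) ∈ ℝⁿ × ℝᵐ × ℝ, the two energy functions satisfy E*(q,v,t) = E(q,v,t) + ∑_{ν=1}^k (ᾱ_ν(q,v,t) − α_ν(q,v,t))·(∂L/∂u_{m+ν})(q, û(q,v,t), t). -/

import Mathlib

open scoped BigOperators
noncomputable section
namespace NH

/-- The phase point `(q, v, t)` with `q : ℝⁿ` (n = m+k) and independent velocities `v : ℝᵐ`. -/
abbrev Pt (m k : ℕ) : Type := (Fin (m+k) → ℝ) × (Fin m → ℝ) × ℝ

/-- The full phase point `(q, u, t)` with all velocities `u : ℝⁿ`. -/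
abbrev PtL (m k : ℕ) : Type := (Fin (m+k) → ℝ) × (Fin (m+k) → ℝ) × ℝ

/-- Partial derivative of `f (q, w, t)` with respect to `q_i`. -/
def pq {n m' : ℕ} (f : (Fin n → ℝ) × (Fin m' → ℝ) × ℝ → ℝ) (i : Fin n)
    (x : (Fin n → ℝ) × (Fin m' → ℝ) × ℝ) : ℝ :=
  fderiv ℝ f x (Pi.single i 1, 0, 0)

/-- Partial derivative of `f (q, w, t)` with respect to the velocity variable `w_j`. -/
def pv {n m' : ℕ} (f : (Fin n → ℝ) × (Fin m' → ℝ) × ℝ → ℝ) (j : Fin m')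
    (x : (Fin n → ℝ) × (Fin m' → ℝ) × ℝ) : ℝ :=
  fderiv ℝ f x (0, Pi.single j 1, 0)

/-- Partial derivative of `f (q, w, t)` with respect to time `t`. -/
def pt {n m' : ℕ} (f : (Fin n → ℝ) × (Fin m' → ℝ) × ℝ → ℝ)
    (x : (Fin n → ℝ) × (Fin m' → ℝ) × ℝ) : ℝ :=
  fderiv ℝ f x (0, 0, 1)

/-- Partial derivative of `U (q, t)` with respect to `q_i`. -/
def pUq {n : ℕ} (U : (Fin n → ℝ) × ℝ → ℝ) (i : Fin n) (x : (Fin n → ℝ) × ℝ) : ℝ :=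
  fderiv ℝ U x (Pi.single i 1, 0)

/-- Partial derivative of `U (q, t)` with respect to `t`. -/
def pUt {n : ℕ} (U : (Fin n → ℝ) × ℝ → ℝ) (x : (Fin n → ℝ) × ℝ) : ℝ :=
  fderiv ℝ U x (0, 1)

variable {m k : ℕ}

/-- `û(q,v,t) = (v₁,…,vₘ, α₁(q,v,t),…,α_k(q,v,t))`. -/
def uhat (α : Fin k → Pt m k → ℝ) (x : Pt m k) : Fin (m+k) → ℝ :=
  Fin.append x.2.1 (fun ν => α ν x)

/-- The full phase point `(q, û(q,v,t), t)` associated to `(q,v,t)`. -/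
def Lpt (α : Fin k → Pt m k → ℝ) (x : Pt m k) : PtL m k :=
  (x.1, uhat α x, x.2.2)

/-- The restricted Lagrangian `L*(q,v,t) = L(q, û(q,v,t), t)`. -/
def Lstar (L : PtL m k → ℝ) (α : Fin k → Pt m k → ℝ) (x : Pt m k) : ℝ :=
  L (Lpt α x)

/-- `ᾱ_ν(q,v,t) = ∑_r v_r ∂α_ν/∂v_r`. -/
def abar (α : Fin k → Pt m k → ℝ) (ν : Fin k) (x : Pt m k) : ℝ :=
  ∑ r : Fin m, x.2.1 r * pv (α ν) r x

/-- The restricted energy `E*(q,v,t) = ∑_r v_r ∂L*/∂v_r − L*`. -/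
def Estar (L : PtL m k → ℝ) (α : Fin k → Pt m k → ℝ) (x : Pt m k) : ℝ :=
  ∑ r : Fin m, x.2.1 r * pv (Lstar L α) r x - Lstar L α x

/-- The energy `E(q,v,t) = ∑_i û_i (∂L/∂u_i)(q,û,t) − L*(q,v,t)`. -/
def En (L : PtL m k → ℝ) (α : Fin k → Pt m k → ℝ) (x : Pt m k) : ℝ :=
  ∑ i : Fin (m+k), uhat α x i * pv L i (Lpt α x) - Lstar L α x

/-- `q̇_i(t)`. -/
def qdot {n : ℕ} (q : ℝ → Fin n → ℝ) (t : ℝ) (i : Fin n) : ℝ :=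
  deriv (fun s => q s i) t

/-- The independent velocities `v(t) = (q̇₁,…,q̇ₘ)` along a curve. -/
def vel (m k : ℕ) (q : ℝ → Fin (m+k) → ℝ) (t : ℝ) (r : Fin m) : ℝ :=
  qdot q t (Fin.castAdd k r)

/-- The point `(q(t), v(t), t)` along a curve. -/
def along (m k : ℕ) (q : ℝ → Fin (m+k) → ℝ) (t : ℝ) : Pt m k :=
  (q t, vel m k q t, t)

/-- The curve satisfies the nonholonomic constraints: `q̇_{m+ν} = α_ν(q, v, t)`. -/
def Constrained (α : Fin k → Pt m k → ℝ) (q : ℝ → Fin (m+k) → ℝ) : Prop :=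
  ∀ (t : ℝ) (ν : Fin k), qdot q t (Fin.natAdd m ν) = α ν (along m k q t)

/-- The Voronec coefficients `B_rν(t)` along a constrained curve. -/
def Bco (α : Fin k → Pt m k → ℝ) (q : ℝ → Fin (m+k) → ℝ) (r : Fin m) (ν : Fin k) (t : ℝ) : ℝ :=
  deriv (fun s => pv (α ν) r (along m k q s)) t
    - pq (α ν) (Fin.castAdd k r) (along m k q t)
    - ∑ μ : Fin k, pv (α μ) r (along m k q t) * pq (α ν) (Fin.natAdd m μ) (along m k q t)

/-- The Voronec equations of motion along a constrained curve. -/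
def Voronec (L : PtL m k → ℝ) (α : Fin k → Pt m k → ℝ) (q : ℝ → Fin (m+k) → ℝ) : Prop :=
  ∀ (r : Fin m) (t : ℝ),
    deriv (fun s => pv (Lstar L α) r (along m k q s)) t
      - pq (Lstar L α) (Fin.castAdd k r) (along m k q t)
      - ∑ ν : Fin k, pq (Lstar L α) (Fin.natAdd m ν) (along m k q t) * pv (α ν) r (along m k q t)
      - ∑ ν : Fin k, Bco α q r ν t * pv L (Fin.natAdd m ν) (Lpt α (along m k q t)) = 0

-- key chain rule lemma
lemma pv_Lstar (L : PtL m k → ℝ) (hL : ContDiff ℝ 2 L)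
    (α : Fin k → Pt m k → ℝ) (hα : ∀ ν, ContDiff ℝ 2 (α ν))
    (x : Pt m k) (r : Fin m) :
    pv (Lstar L α) r x
      = pv L (Fin.castAdd k r) (Lpt α x)
        + ∑ ν : Fin k, pv (α ν) r x * pv L (Fin.natAdd m ν) (Lpt α x) := by
  classical
  set y := Lpt α x with hy
  -- coordinate derivatives of uhat
  set D : Fin (m+k) → (Pt m k →L[ℝ] ℝ) := fun i => fderiv ℝ (fun x => uhat α x i) x with hD
  have hcoord : ∀ j : Fin m, (fun x : Pt m k => uhat α x (Fin.castAdd k j)) = (fun x : Pt m k => x.2.1 j) := by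
    intro j; funext z; simp [uhat, Fin.append_left]
  have hcoord' : ∀ ν : Fin k, (fun x : Pt m k => uhat α x (Fin.natAdd m ν)) = α ν := by
    intro ν; funext z; simp [uhat, Fin.append_right]
  have hdiff : ∀ i, DifferentiableAt ℝ (fun x : Pt m k => uhat α x i) x := by
    intro i
    refine Fin.addCases (fun j => ?_) (fun ν => ?_) i
    · rw [hcoord]; fun_prop
    · rw [hcoord']; exact ((hα ν).differentiable two_ne_zero).differentiableAt
  have hui : ∀ i, HasFDerivAt (fun x : Pt m k => uhat α x i) (D i) x :=
    fun i => (hdiff i).hasFDerivAt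
  have h2 : HasFDerivAt (uhat α) (ContinuousLinearMap.pi D) x := hasFDerivAt_pi.2 hui
  have h1 : HasFDerivAt (fun x : Pt m k => x.1) (ContinuousLinearMap.fst ℝ _ _) x := hasFDerivAt_fst
  have h3 : HasFDerivAt (fun x : Pt m k => x.2.2)
      ((ContinuousLinearMap.snd ℝ (Fin m → ℝ) ℝ).comp (ContinuousLinearMap.snd ℝ (Fin (m+k) → ℝ) _)) x :=
    (((ContinuousLinearMap.snd ℝ (Fin m → ℝ) ℝ).comp (ContinuousLinearMap.snd ℝ (Fin (m+k) → ℝ) _))).hasFDerivAt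
  have hLpt : HasFDerivAt (Lpt α)
      ((ContinuousLinearMap.fst ℝ _ _).prod ((ContinuousLinearMap.pi D).prod _)) x :=
    HasFDerivAt.prodMk h1 (HasFDerivAt.prodMk h2 h3)
  have hLd : HasFDerivAt L (fderiv ℝ L y) y := ((hL.differentiable two_ne_zero) y).hasFDerivAt
  have hS : HasFDerivAt (Lstar L α) ((fderiv ℝ L y).comp _) x := hLd.comp x hLpt
  have hfd : pv (Lstar L α) r x
      = fderiv ℝ L y ((0 : Fin (m+k) → ℝ), (fun i => D i (0, Pi.single r 1, 0)), (0:ℝ)) := by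
    rw [pv, hS.fderiv]
    simp [ContinuousLinearMap.comp_apply, ContinuousLinearMap.prod_apply]
  -- identify d
  have hdA : ∀ j : Fin m, D (Fin.castAdd k j) ((0 : Fin (m+k) → ℝ), Pi.single r 1, (0:ℝ)) = (Pi.single r 1 : Fin m → ℝ) j := by
    intro j
    have : HasFDerivAt (fun x : Pt m k => uhat α x (Fin.castAdd k j))
        (((ContinuousLinearMap.proj j).comp
          ((ContinuousLinearMap.fst ℝ (Fin m → ℝ) ℝ).comp (ContinuousLinearMap.snd ℝ (Fin (m+k) → ℝ) _)))) x := by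
      rw [hcoord]
      exact (((ContinuousLinearMap.proj j).comp
          ((ContinuousLinearMap.fst ℝ (Fin m → ℝ) ℝ).comp (ContinuousLinearMap.snd ℝ (Fin (m+k) → ℝ) _)))).hasFDerivAt
    rw [hD]; simp only [this.fderiv]
    simp
  have hdB : ∀ ν : Fin k, D (Fin.natAdd m ν) ((0 : Fin (m+k) → ℝ), Pi.single r 1, (0:ℝ)) = pv (α ν) r x := by
    intro ν; rw [hD]; simp only [hcoord']; rfl
  set c : Fin k → ℝ := fun ν => pv (α ν) r x with hc
  have hdsum : (fun i => D i ((0 : Fin (m+k) → ℝ), Pi.single r 1, (0:ℝ)))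
      = (Pi.single (Fin.castAdd k r) 1 : Fin (m+k) → ℝ) + ∑ ν : Fin k, c ν • (Pi.single (Fin.natAdd m ν) 1 : Fin (m+k) → ℝ) := by
    funext i
    refine Fin.addCases (fun j => ?_) (fun ν => ?_) i
    · rw [hdA]
      have hj := j.isLt
      simp only [Pi.add_apply, Finset.sum_apply, Pi.smul_apply, smul_eq_mul,
        Pi.single_apply, Fin.ext_iff, Fin.coe_castAdd, Fin.coe_natAdd]
      rw [Finset.sum_eq_zero (fun ν _ => by rw [if_neg (by omega), mul_zero]), add_zero]
    · rw [hdB]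
      have hr := r.isLt
      have hsum : (∑ b : Fin k, if m + (ν:ℕ) = m + (b:ℕ) then c b else 0) = c ν := by
        rw [Finset.sum_eq_single ν]
        · simp
        · intro b _ hb; rw [if_neg (fun h => hb (Fin.ext (by omega)))]
        · intro h; exact absurd (Finset.mem_univ ν) h
      simp only [Pi.add_apply, Finset.sum_apply, Pi.smul_apply, smul_eq_mul,
        Pi.single_apply, Fin.ext_iff, Fin.coe_castAdd, Fin.coe_natAdd, mul_ite, mul_one, mul_zero]
      rw [if_neg (by omega), zero_add, hsum, hc]
  -- inject into the product and use linearity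
  set J : (Fin (m+k) → ℝ) →L[ℝ] ((Fin (m+k) → ℝ) × (Fin (m+k) → ℝ) × ℝ) :=
    (ContinuousLinearMap.inr ℝ (Fin (m+k) → ℝ) ((Fin (m+k) → ℝ) × ℝ)).comp
      (ContinuousLinearMap.inl ℝ (Fin (m+k) → ℝ) ℝ) with hJ
  have hJap : ∀ d : Fin (m+k) → ℝ, J d = ((0 : Fin (m+k) → ℝ), d, (0:ℝ)) := by
    intro d; simp [hJ]
  set T : (Fin (m+k) → ℝ) →L[ℝ] ℝ := (fderiv ℝ L y).comp J with hT
  have hTval : ∀ i : Fin (m+k), T (Pi.single i 1) = pv L i y := by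
    intro i; simp [hT, hJap, pv]
  rw [hfd, hdsum, ← hJap, ← ContinuousLinearMap.comp_apply, ← hT]
  rw [map_add, map_sum]
  simp only [map_smul, smul_eq_mul, hTval]
  rfl


lemma swap_sum (v : Fin m → ℝ) (c : Fin m → Fin k → ℝ) (P : Fin k → ℝ) :
    ∑ r : Fin m, v r * (∑ ν : Fin k, c r ν * P ν)
      = ∑ ν : Fin k, (∑ r : Fin m, v r * c r ν) * P ν := by
  simp only [Finset.mul_sum, Finset.sum_mul]
  rw [Finset.sum_comm]
  exact Finset.sum_congr rfl fun ν _ => Finset.sum_congr rfl fun r _ => by ring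

theorem energy_comparison (m k : ℕ) (hm : 0 < m) (hk : 0 < k)
    (L : PtL m k → ℝ) (hL : ContDiff ℝ 2 L)
    (α : Fin k → Pt m k → ℝ) (hα : ∀ ν, ContDiff ℝ 2 (α ν))
 :
    ∀ x : Pt m k,
      Estar L α x
        = En L α x
          + ∑ ν : Fin k, (abar α ν x - α ν x) * pv L (Fin.natAdd m ν) (Lpt α x) := by
  intro x
  unfold Estar En abar
  rw [Fin.sum_univ_add]
  simp only [pv_Lstar L hL α hα x, uhat, Fin.append_left, Fin.append_right]
  simp only [mul_add, Finset.sum_add_distrib]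
  rw [swap_sum x.2.1 (fun r ν => pv (α ν) r x) (fun ν => pv L (Fin.natAdd m ν) (Lpt α x))]
  simp only [sub_mul, Finset.sum_sub_distrib]
  ring


end NH
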